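/- Let G and H be groups and let K be a normal subgroup of G with K ⊆ [G,G]. Suppose G is isoclinic to H via isomorphisms ζ : G/Z(G) → H/Z(H) and η : [G,G] → [H,H]. Then η(K) is a normal subgroup of H and G/K is isoclinic to H/η(K). -/

import Mathlib

open scoped commutatorElement

theorem mem_commutator_of {G : Type} [Group G] (g₁ g₂ : G) : ⁅g₁, g₂⁆ ∈ commutator G := by
  rw [commutator_def]
  exact Subgroup.commutator_mem_commutator (Subgroup.mem_top _) (Subgroup.mem_top _)

/-- Two groups are isoclinic. -/
def IsIsoclinic (G H : Type) [Group G] [Group H] : Prop :=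
  ∃ (ζ : (G ⧸ Subgroup.center G) ≃* (H ⧸ Subgroup.center H))
    (η : (commutator G) ≃* (commutator H)),
    ∀ (g₁ g₂ : G) (h₁ h₂ : H),
      ζ ((g₁ : G) : G ⧸ Subgroup.center G) = ((h₁ : H) : H ⧸ Subgroup.center H) →
      ζ ((g₂ : G) : G ⧸ Subgroup.center G) = ((h₂ : H) : H ⧸ Subgroup.center H) →
      η ⟨⁅g₁, g₂⁆, mem_commutator_of g₁ g₂⟩ = ⟨⁅h₁, h₂⁆, mem_commutator_of h₁ h₂⟩

lemma comm_mul_central_left {M : Type} [Group M] {z : M} (hz : z ∈ Subgroup.center M)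
    (a b : M) : ⁅a * z, b⁆ = ⁅a, b⁆ := by
  have h1 : z * b * z⁻¹ = b := by
    rw [← Subgroup.mem_center_iff.mp hz b]; group
  rw [commutatorElement_def, commutatorElement_def]
  calc a * z * b * (a * z)⁻¹ * b⁻¹ = a * (z * b * z⁻¹) * a⁻¹ * b⁻¹ := by group
    _ = a * b * a⁻¹ * b⁻¹ := by rw [h1]

lemma comm_mul_central_right {M : Type} [Group M] {w : M} (hw : w ∈ Subgroup.center M)
    (a b : M) : ⁅a, b * w⁆ = ⁅a, b⁆ := by
  have h1 : w * a⁻¹ * w⁻¹ = a⁻¹ := by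
    rw [← Subgroup.mem_center_iff.mp hw a⁻¹]; group
  rw [commutatorElement_def, commutatorElement_def]
  calc a * (b * w) * a⁻¹ * (b * w)⁻¹ = a * b * (w * a⁻¹ * w⁻¹) * b⁻¹ := by group
    _ = a * b * a⁻¹ * b⁻¹ := by rw [h1]

lemma commutator_mul_central {M : Type} [Group M] {z w : M} (hz : z ∈ Subgroup.center M)
    (hw : w ∈ Subgroup.center M) (a b : M) : ⁅a * z, b * w⁆ = ⁅a, b⁆ := by
  rw [comm_mul_central_left hz, comm_mul_central_right hw]

section Main

variable {G H : Type} [Group G] [Group H]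

/-- Lemma A : ζ agrees with η on the commutator subgroup, modulo the center. -/
lemma etaA (ζ : (G ⧸ Subgroup.center G) ≃* (H ⧸ Subgroup.center H))
    (η : (commutator G) ≃* (commutator H))
    (hcompat : ∀ (g₁ g₂ : G) (h₁ h₂ : H),
      ζ ((g₁ : G) : G ⧸ Subgroup.center G) = ((h₁ : H) : H ⧸ Subgroup.center H) →
      ζ ((g₂ : G) : G ⧸ Subgroup.center G) = ((h₂ : H) : H ⧸ Subgroup.center H) →
      η ⟨⁅g₁, g₂⁆, mem_commutator_of g₁ g₂⟩ = ⟨⁅h₁, h₂⁆, mem_commutator_of h₁ h₂⟩)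
    (k : G) (hk : k ∈ commutator G) :
    ζ ((k : G) : G ⧸ Subgroup.center G)
      = (((η ⟨k, hk⟩ : commutator H) : H) : H ⧸ Subgroup.center H) := by
  have hk' : k ∈ Subgroup.closure (commutatorSet G) := by
    rwa [← commutator_eq_closure]
  revert hk
  induction hk' using Subgroup.closure_induction with
  | mem x hx =>
    intro hk
    obtain ⟨a, b, rfl⟩ := hx
    obtain ⟨a', ha⟩ := QuotientGroup.mk_surjective (ζ ((a : G) : G ⧸ Subgroup.center G))
    obtain ⟨b', hb⟩ := QuotientGroup.mk_surjective (ζ ((b : G) : G ⧸ Subgroup.center G))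
    have hcc := hcompat a b a' b' ha.symm hb.symm
    have h1 : ((η ⟨⁅a, b⁆, hk⟩ : commutator H) : H) = ⁅a', b'⁆ := by
      rw [show (⟨⁅a, b⁆, hk⟩ : commutator G) = ⟨⁅a, b⁆, mem_commutator_of a b⟩ from rfl, hcc]
    rw [h1]
    have h2 : ((⁅a, b⁆ : G) : G ⧸ Subgroup.center G)
        = ⁅((a : G) : G ⧸ Subgroup.center G), ((b : G) : G ⧸ Subgroup.center G)⁆ := by
      simp [commutatorElement_def]
    have h3 : ((⁅a', b'⁆ : H) : H ⧸ Subgroup.center H)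
        = ⁅((a' : H) : H ⧸ Subgroup.center H), ((b' : H) : H ⧸ Subgroup.center H)⁆ := by
      simp [commutatorElement_def]
    rw [h2, h3, map_commutatorElement, ← ha, ← hb]
  | one =>
    intro hk
    have : (⟨(1 : G), hk⟩ : commutator G) = 1 := rfl
    rw [this, map_one]
    simp
  | mul x y hx hy ihx ihy =>
    intro hk
    have hx' : x ∈ commutator G := by rwa [commutator_eq_closure]
    have hy' : y ∈ commutator G := by rwa [commutator_eq_closure]
    have : (⟨x * y, hk⟩ : commutator G) = ⟨x, hx'⟩ * ⟨y, hy'⟩ := rfl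
    rw [this, map_mul]
    rw [show ((x * y : G) : G ⧸ Subgroup.center G) = ↑x * ↑y from QuotientGroup.mk_mul _ _ _,
      map_mul, ihx hx', ihy hy']
    rw [← QuotientGroup.mk_mul]
    rfl
  | inv x hx ihx =>
    intro hk
    have hx' : x ∈ commutator G := by rwa [commutator_eq_closure]
    have : (⟨x⁻¹, hk⟩ : commutator G) = (⟨x, hx'⟩)⁻¹ := rfl
    rw [this, map_inv]
    rw [show ((x⁻¹ : G) : G ⧸ Subgroup.center G) = (↑x)⁻¹ from rfl,
      map_inv, ihx hx']
    rfl

end Main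

section Main2

variable {G H : Type} [Group G] [Group H]

/-- The subgroup η(K) of H. -/
def Lsub (K : Subgroup G) (η : (commutator G) ≃* (commutator H)) : Subgroup H :=
  ((K.subgroupOf (commutator G)).map η.toMonoidHom).map (commutator H).subtype

lemma mem_L (K : Subgroup G) (hK : K ≤ commutator G) (η : (commutator G) ≃* (commutator H))
    (x : H) : x ∈ Lsub K η ↔ ∃ k, ∃ hk : k ∈ K, ((η ⟨k, hK hk⟩ : commutator H) : H) = x := by
  constructor
  · rintro ⟨c, ⟨c', hc', rfl⟩, rfl⟩
    exact ⟨(c' : G), hc', rfl⟩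
  · rintro ⟨k, hk, rfl⟩
    exact ⟨η ⟨k, hK hk⟩, ⟨⟨k, hK hk⟩, hk, rfl⟩, rfl⟩

lemma exists_matched (ζ : (G ⧸ Subgroup.center G) ≃* (H ⧸ Subgroup.center H)) (h : H) :
    ∃ g : G, ζ ((g : G) : G ⧸ Subgroup.center G) = ((h : H) : H ⧸ Subgroup.center H) := by
  obtain ⟨g, hg⟩ := QuotientGroup.mk_surjective (ζ.symm ((h : H) : H ⧸ Subgroup.center H))
  exact ⟨g, by rw [hg, MulEquiv.apply_symm_apply]⟩

lemma zinv (ζ : (G ⧸ Subgroup.center G) ≃* (H ⧸ Subgroup.center H)) (g : G) (h : H)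
    (hgh : ζ ((g : G) : G ⧸ Subgroup.center G) = ((h : H) : H ⧸ Subgroup.center H)) :
    ζ ((g⁻¹ : G) : G ⧸ Subgroup.center G) = ((h⁻¹ : H) : H ⧸ Subgroup.center H) := by
  rw [show ((g⁻¹ : G) : G ⧸ Subgroup.center G) = (↑g)⁻¹ from rfl,
    map_inv, hgh, show ((h⁻¹ : H) : H ⧸ Subgroup.center H) = (↑h)⁻¹ from rfl]

variable (K : Subgroup G) [K.Normal] (hK : K ≤ commutator G)
    (ζ : (G ⧸ Subgroup.center G) ≃* (H ⧸ Subgroup.center H))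
    (η : (commutator G) ≃* (commutator H))
    (hcompat : ∀ (g₁ g₂ : G) (h₁ h₂ : H),
      ζ ((g₁ : G) : G ⧸ Subgroup.center G) = ((h₁ : H) : H ⧸ Subgroup.center H) →
      ζ ((g₂ : G) : G ⧸ Subgroup.center G) = ((h₂ : H) : H ⧸ Subgroup.center H) →
      η ⟨⁅g₁, g₂⁆, mem_commutator_of g₁ g₂⟩ = ⟨⁅h₁, h₂⁆, mem_commutator_of h₁ h₂⟩)

include hcompat in
/-- Lemma B: η intertwines conjugation (for matched pairs). -/
lemma etaB (g : G) (h : H)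
    (hgh : ζ ((g : G) : G ⧸ Subgroup.center G) = ((h : H) : H ⧸ Subgroup.center H))
    (k : G) (hk : k ∈ commutator G) (hgkg : g * k * g⁻¹ ∈ commutator G) :
    ((η ⟨g * k * g⁻¹, hgkg⟩ : commutator H) : H)
      = h * ((η ⟨k, hk⟩ : commutator H) : H) * h⁻¹ := by
  set y : H := ((η ⟨k, hk⟩ : commutator H) : H) with hy
  have hky : ζ ((k : G) : G ⧸ Subgroup.center G) = ((y : H) : H ⧸ Subgroup.center H) :=
    etaA ζ η hcompat k hk
  have hcc := hcompat g k h y hgh hky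
  have e1 : (⟨g * k * g⁻¹, hgkg⟩ : commutator G)
      = ⟨⁅g, k⁆, mem_commutator_of g k⟩ * ⟨k, hk⟩ := by
    apply Subtype.ext
    show g * k * g⁻¹ = ⁅g, k⁆ * k
    rw [commutatorElement_def]; group
  rw [e1, map_mul, hcc]
  show ⁅h, y⁆ * y = h * y * h⁻¹
  rw [commutatorElement_def]; group

include hK hcompat in
lemma L_normal : (Lsub K η).Normal := by
  constructor
  intro x hx h
  rw [mem_L K hK η] at hx ⊢
  obtain ⟨k, hk, rfl⟩ := hx
  obtain ⟨g, hgh⟩ := exists_matched ζ h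
  refine ⟨g * k * g⁻¹, ‹K.Normal›.conj_mem k hk g, ?_⟩
  rw [etaB ζ η hcompat g h hgh k (hK hk) (hK (‹K.Normal›.conj_mem k hk g))]

lemma mem_center_quot_iff {M : Type} [Group M] (N : Subgroup M) [N.Normal] (g : M) :
    ((g : M ⧸ N) ∈ Subgroup.center (M ⧸ N)) ↔ ∀ x : M, ⁅g⁻¹, x⁻¹⁆ ∈ N := by
  rw [Subgroup.mem_center_iff]
  constructor
  · intro hc x
    have h1 : ((x : M ⧸ N)) * ↑g = ↑g * ↑x := hc ↑x
    rw [← QuotientGroup.mk_mul, ← QuotientGroup.mk_mul, QuotientGroup.eq] at h1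
    have e : ⁅g⁻¹, x⁻¹⁆ = (x * g)⁻¹ * (g * x) := by rw [commutatorElement_def]; group
    rwa [e]
  · intro hc q
    obtain ⟨x, rfl⟩ := QuotientGroup.mk_surjective q
    rw [← QuotientGroup.mk_mul, ← QuotientGroup.mk_mul, QuotientGroup.eq]
    have e : ⁅g⁻¹, x⁻¹⁆ = (x * g)⁻¹ * (g * x) := by rw [commutatorElement_def]; group
    rw [← e]
    exact hc x

include hK hcompat in
lemma matched_center [(Lsub K η).Normal] (g : G) (h : H)
    (hgh : ζ ((g : G) : G ⧸ Subgroup.center G) = ((h : H) : H ⧸ Subgroup.center H)) :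
    ((g : G ⧸ K) ∈ Subgroup.center (G ⧸ K))
      ↔ ((h : H ⧸ Lsub K η) ∈ Subgroup.center (H ⧸ Lsub K η)) := by
  rw [mem_center_quot_iff, mem_center_quot_iff]
  constructor
  · intro hg y
    obtain ⟨x, hx⟩ := exists_matched ζ y
    have hcc := hcompat g⁻¹ x⁻¹ h⁻¹ y⁻¹ (zinv ζ g h hgh) (zinv ζ x y hx)
    rw [mem_L K hK η]
    refine ⟨⁅g⁻¹, x⁻¹⁆, hg x, ?_⟩
    rw [show (⟨⁅g⁻¹, x⁻¹⁆, hK (hg x)⟩ : commutator G)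
      = ⟨⁅g⁻¹, x⁻¹⁆, mem_commutator_of _ _⟩ from rfl, hcc]
  · intro hh x
    obtain ⟨y, hy⟩ := QuotientGroup.mk_surjective (ζ ((x : G) : G ⧸ Subgroup.center G))
    have hcc := hcompat g⁻¹ x⁻¹ h⁻¹ y⁻¹ (zinv ζ g h hgh) (zinv ζ x y hy.symm)
    have hmem := hh y
    rw [mem_L K hK η] at hmem
    obtain ⟨k, hkK, hke⟩ := hmem
    have h2 : η ⟨k, hK hkK⟩ = η ⟨⁅g⁻¹, x⁻¹⁆, mem_commutator_of _ _⟩ := by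
      apply Subtype.ext
      rw [hke, hcc]
    have h3 : k = ⁅g⁻¹, x⁻¹⁆ := Subtype.ext_iff.mp (η.injective h2)
    rw [← h3]
    exact hkK

end Main2

section Main3

variable {G H : Type} [Group G] [Group H]

/-- Preimage in `M` of the center of `M ⧸ N`. -/
def ZKc {M : Type} [Group M] (N : Subgroup M) [N.Normal] : Subgroup M :=
  (Subgroup.center (M ⧸ N)).comap (QuotientGroup.mk' N)

instance ZKc_normal {M : Type} [Group M] (N : Subgroup M) [N.Normal] : (ZKc N).Normal :=
  Subgroup.normal_comap _

lemma le_ZKc {M : Type} [Group M] (N : Subgroup M) [N.Normal] : N ≤ ZKc N := by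
  intro n hn
  rw [ZKc, Subgroup.mem_comap, QuotientGroup.mk'_apply,
    (QuotientGroup.eq_one_iff n).mpr hn]
  exact Subgroup.one_mem _

lemma center_le_ZKc {M : Type} [Group M] (N : Subgroup M) [N.Normal] :
    Subgroup.center M ≤ ZKc N := by
  intro z hz
  rw [ZKc, Subgroup.mem_comap, QuotientGroup.mk'_apply, Subgroup.mem_center_iff]
  intro q
  obtain ⟨x, rfl⟩ := QuotientGroup.mk_surjective q
  rw [← QuotientGroup.mk_mul, ← QuotientGroup.mk_mul, Subgroup.mem_center_iff.mp hz x]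

lemma mapZKc_eq {M : Type} [Group M] (N : Subgroup M) [N.Normal] :
    (ZKc N).map (QuotientGroup.mk' N) = Subgroup.center (M ⧸ N) :=
  Subgroup.map_comap_eq_self_of_surjective (QuotientGroup.mk'_surjective _) _

lemma comm_quot {M : Type} [Group M] (N : Subgroup M) [N.Normal] :
    commutator (M ⧸ N) = (commutator M).map (QuotientGroup.mk' N) := by
  rw [commutator_def, commutator_def, Subgroup.map_commutator,
    Subgroup.map_top_of_surjective _ (QuotientGroup.mk'_surjective _)]

variable (K : Subgroup G) [K.Normal] (hK : K ≤ commutator G)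
    (ζ : (G ⧸ Subgroup.center G) ≃* (H ⧸ Subgroup.center H))
    (η : (commutator G) ≃* (commutator H))
    (hcompat : ∀ (g₁ g₂ : G) (h₁ h₂ : H),
      ζ ((g₁ : G) : G ⧸ Subgroup.center G) = ((h₁ : H) : H ⧸ Subgroup.center H) →
      ζ ((g₂ : G) : G ⧸ Subgroup.center G) = ((h₂ : H) : H ⧸ Subgroup.center H) →
      η ⟨⁅g₁, g₂⁆, mem_commutator_of g₁ g₂⟩ = ⟨⁅h₁, h₂⁆, mem_commutator_of h₁ h₂⟩)

def psiHom [(Lsub K η).Normal] : G →* H ⧸ ZKc (Lsub K η) :=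
  ((QuotientGroup.map (Subgroup.center H) (ZKc (Lsub K η)) (MonoidHom.id H)
      (by rw [Subgroup.comap_id]; exact center_le_ZKc _)).comp ζ.toMonoidHom).comp
    (QuotientGroup.mk' (Subgroup.center G))

lemma psi_apply [(Lsub K η).Normal] (g : G) (h : H)
    (hgh : ζ ((g : G) : G ⧸ Subgroup.center G) = ((h : H) : H ⧸ Subgroup.center H)) :
    psiHom K ζ η g = ((h : H) : H ⧸ ZKc (Lsub K η)) := by
  simp only [psiHom, MonoidHom.comp_apply, MulEquiv.coe_toMonoidHom, QuotientGroup.mk'_apply]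
  rw [hgh, QuotientGroup.map_mk]
  rfl

lemma psi_surj [(Lsub K η).Normal] : Function.Surjective (psiHom K ζ η) := by
  intro q
  obtain ⟨h, rfl⟩ := QuotientGroup.mk_surjective q
  obtain ⟨g, hg⟩ := exists_matched ζ h
  exact ⟨g, psi_apply K ζ η g h hg⟩

include hK hcompat in
lemma psi_ker [(Lsub K η).Normal] : (psiHom K ζ η).ker = ZKc K := by
  ext g
  rw [MonoidHom.mem_ker]
  obtain ⟨h, hh⟩ := QuotientGroup.mk_surjective (ζ ((g : G) : G ⧸ Subgroup.center G))
  rw [psi_apply K ζ η g h hh.symm, QuotientGroup.eq_one_iff]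
  show h ∈ ZKc (Lsub K η) ↔ g ∈ ZKc K
  rw [ZKc, ZKc, Subgroup.mem_comap, Subgroup.mem_comap, QuotientGroup.mk'_apply,
    QuotientGroup.mk'_apply]
  exact (matched_center K hK ζ η hcompat g h hh.symm).symm

noncomputable def zeta' [(Lsub K η).Normal] (hker : (psiHom K ζ η).ker = ZKc K) :
    ((G ⧸ K) ⧸ Subgroup.center (G ⧸ K)) ≃* ((H ⧸ Lsub K η) ⧸ Subgroup.center (H ⧸ Lsub K η)) :=
  (QuotientGroup.quotientMulEquivOfEq (mapZKc_eq K).symm).trans <|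
    (QuotientGroup.quotientQuotientEquivQuotient K (ZKc K) (le_ZKc K)).trans <|
      ((QuotientGroup.quotientMulEquivOfEq hker.symm).trans
        (QuotientGroup.quotientKerEquivOfSurjective _ (psi_surj K ζ η))).trans <|
        ((QuotientGroup.quotientMulEquivOfEq (mapZKc_eq (Lsub K η)).symm).trans
          (QuotientGroup.quotientQuotientEquivQuotient (Lsub K η) (ZKc (Lsub K η))
            (le_ZKc (Lsub K η)))).symm

lemma zeta'_apply [(Lsub K η).Normal] (hker : (psiHom K ζ η).ker = ZKc K) (g : G) (h : H)
    (hgh : ζ ((g : G) : G ⧸ Subgroup.center G) = ((h : H) : H ⧸ Subgroup.center H)) :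
    zeta' K ζ η hker (((g : G ⧸ K) : G ⧸ K) : (G ⧸ K) ⧸ Subgroup.center (G ⧸ K))
      = (((h : H ⧸ Lsub K η)) : (H ⧸ Lsub K η) ⧸ Subgroup.center (H ⧸ Lsub K η)) := by
  simp only [zeta', MulEquiv.trans_apply]
  rw [QuotientGroup.quotientMulEquivOfEq_mk]
  rw [show (QuotientGroup.quotientQuotientEquivQuotient K (ZKc K) (le_ZKc K))
        ((((g : G ⧸ K)) : (G ⧸ K) ⧸ (ZKc K).map (QuotientGroup.mk' K))) = ((g : G) : G ⧸ ZKc K)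
      from QuotientGroup.quotientQuotientEquivQuotientAux_mk_mk K (ZKc K) (le_ZKc K) g]
  rw [QuotientGroup.quotientMulEquivOfEq_mk hker.symm g]
  rw [show (QuotientGroup.quotientKerEquivOfSurjective _ (psi_surj K ζ η))
        (((g : G) : G ⧸ (psiHom K ζ η).ker)) = psiHom K ζ η g from rfl]
  rw [psi_apply K ζ η g h hgh]
  rw [MulEquiv.symm_apply_eq, MulEquiv.trans_apply,
    QuotientGroup.quotientMulEquivOfEq_mk (mapZKc_eq (Lsub K η)).symm ((h : H ⧸ Lsub K η))]
  exact (QuotientGroup.quotientQuotientEquivQuotientAux_mk_mk (Lsub K η) (ZKc (Lsub K η)) (le_ZKc (Lsub K η)) h).symm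

end Main3

section Main4

variable {G H : Type} [Group G] [Group H]
variable (K : Subgroup G) [K.Normal] (hK : K ≤ commutator G)
    (ζ : (G ⧸ Subgroup.center G) ≃* (H ⧸ Subgroup.center H))
    (η : (commutator G) ≃* (commutator H))
    (hcompat : ∀ (g₁ g₂ : G) (h₁ h₂ : H),
      ζ ((g₁ : G) : G ⧸ Subgroup.center G) = ((h₁ : H) : H ⧸ Subgroup.center H) →
      ζ ((g₂ : G) : G ⧸ Subgroup.center G) = ((h₂ : H) : H ⧸ Subgroup.center H) →
      η ⟨⁅g₁, g₂⁆, mem_commutator_of g₁ g₂⟩ = ⟨⁅h₁, h₂⁆, mem_commutator_of h₁ h₂⟩)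

def tauHom : (commutator G) →* (commutator (G ⧸ K)) :=
  MonoidHom.codRestrict ((QuotientGroup.mk' K).comp (commutator G).subtype) _ (fun c => by
    rw [comm_quot]
    exact ⟨(c : G), c.2, rfl⟩)

lemma tau_surj : Function.Surjective (tauHom K) := by
  intro q
  have hq := (comm_quot K).le q.2
  obtain ⟨k, hk, hkq⟩ := hq
  exact ⟨⟨k, hk⟩, Subtype.ext hkq⟩

lemma tau_ker : (tauHom K).ker = K.subgroupOf (commutator G) := by
  ext c
  rw [MonoidHom.mem_ker, Subgroup.mem_subgroupOf, Subtype.ext_iff]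
  show (((c : G)) : G ⧸ K) = 1 ↔ (c : G) ∈ K
  rw [QuotientGroup.eq_one_iff]

def thetaHom [(Lsub K η).Normal] : (commutator G) →* (commutator (H ⧸ Lsub K η)) :=
  MonoidHom.codRestrict
    ((QuotientGroup.mk' (Lsub K η)).comp ((commutator H).subtype.comp η.toMonoidHom)) _
    (fun c => by
      rw [comm_quot]
      exact ⟨((η c : commutator H) : H), (η c).2, rfl⟩)

lemma theta_surj [(Lsub K η).Normal] : Function.Surjective (thetaHom K η) := by
  intro q
  have hq := (comm_quot (Lsub K η)).le q.2
  obtain ⟨c, hc, hcq⟩ := hq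
  refine ⟨η.symm ⟨c, hc⟩, Subtype.ext ?_⟩
  show (((η (η.symm ⟨c, hc⟩) : commutator H) : H) : H ⧸ Lsub K η) = (q : H ⧸ Lsub K η)
  rw [MulEquiv.apply_symm_apply]
  exact hcq

include hK in
lemma theta_ker [(Lsub K η).Normal] : (thetaHom K η).ker = K.subgroupOf (commutator G) := by
  ext c
  rw [MonoidHom.mem_ker, Subgroup.mem_subgroupOf, Subtype.ext_iff]
  show ((((η c : commutator H) : H)) : H ⧸ Lsub K η) = 1 ↔ (c : G) ∈ K
  rw [QuotientGroup.eq_one_iff, mem_L K hK η]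
  constructor
  · rintro ⟨k, hk, hke⟩
    have h2 : (⟨k, hK hk⟩ : commutator G) = c := η.injective (Subtype.ext hke)
    rw [← h2]
    exact hk
  · intro hc
    exact ⟨(c : G), hc, by rw [show (⟨(c : G), hK hc⟩ : commutator G) = c from Subtype.ext rfl]⟩

noncomputable def eta' [(Lsub K η).Normal]
    (h1 : (tauHom K).ker = K.subgroupOf (commutator G))
    (h2 : (thetaHom K η).ker = K.subgroupOf (commutator G)) :
    (commutator (G ⧸ K)) ≃* (commutator (H ⧸ Lsub K η)) :=
  ((QuotientGroup.quotientKerEquivOfSurjective _ (tau_surj K)).symm.trans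
    (QuotientGroup.quotientMulEquivOfEq (h1.trans h2.symm))).trans
    (QuotientGroup.quotientKerEquivOfSurjective _ (theta_surj K η))

lemma eta'_apply [(Lsub K η).Normal]
    (h1 : (tauHom K).ker = K.subgroupOf (commutator G))
    (h2 : (thetaHom K η).ker = K.subgroupOf (commutator G)) (c : commutator G) :
    eta' K η h1 h2 (tauHom K c) = thetaHom K η c := by
  simp only [eta', MulEquiv.trans_apply]
  rw [show (QuotientGroup.quotientKerEquivOfSurjective _ (tau_surj K)).symm (tauHom K c)
      = ((c : commutator G ⧸ (tauHom K).ker)) by rw [MulEquiv.symm_apply_eq]; rfl]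
  rw [QuotientGroup.quotientMulEquivOfEq_mk (h1.trans h2.symm) c]
  rfl

end Main4

section Main5

variable {G H : Type} [Group G] [Group H]
variable (K : Subgroup G) [K.Normal] (hK : K ≤ commutator G)
    (ζ : (G ⧸ Subgroup.center G) ≃* (H ⧸ Subgroup.center H))
    (η : (commutator G) ≃* (commutator H))
    (hcompat : ∀ (g₁ g₂ : G) (h₁ h₂ : H),
      ζ ((g₁ : G) : G ⧸ Subgroup.center G) = ((h₁ : H) : H ⧸ Subgroup.center H) →
      ζ ((g₂ : G) : G ⧸ Subgroup.center G) = ((h₂ : H) : H ⧸ Subgroup.center H) →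
      η ⟨⁅g₁, g₂⁆, mem_commutator_of g₁ g₂⟩ = ⟨⁅h₁, h₂⁆, mem_commutator_of h₁ h₂⟩)

include hK hcompat in
theorem main_isoclinic [(Lsub K η).Normal] : IsIsoclinic (G ⧸ K) (H ⧸ Lsub K η) := by
  refine ⟨zeta' K ζ η (psi_ker K hK ζ η hcompat),
    eta' K η (tau_ker K) (theta_ker K hK η), ?_⟩
  intro q1 q2 r1 r2 hq1 hq2
  obtain ⟨g₁, rfl⟩ := QuotientGroup.mk_surjective q1
  obtain ⟨g₂, rfl⟩ := QuotientGroup.mk_surjective q2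
  obtain ⟨h₁, rfl⟩ := QuotientGroup.mk_surjective r1
  obtain ⟨h₂, rfl⟩ := QuotientGroup.mk_surjective r2
  obtain ⟨h₁', hg1⟩ := QuotientGroup.mk_surjective (ζ ((g₁ : G) : G ⧸ Subgroup.center G))
  obtain ⟨h₂', hg2⟩ := QuotientGroup.mk_surjective (ζ ((g₂ : G) : G ⧸ Subgroup.center G))
  rw [zeta'_apply K ζ η _ g₁ h₁' hg1.symm] at hq1
  rw [zeta'_apply K ζ η _ g₂ h₂' hg2.symm] at hq2
  have hz1 : ((h₁'⁻¹ * h₁ : H) : H ⧸ Lsub K η) ∈ Subgroup.center (H ⧸ Lsub K η) := by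
    have h3 := QuotientGroup.eq.mp hq1
    rwa [show ((h₁' : H ⧸ Lsub K η))⁻¹ * ((h₁ : H ⧸ Lsub K η))
      = ((h₁'⁻¹ * h₁ : H) : H ⧸ Lsub K η) from rfl] at h3
  have hz2 : ((h₂'⁻¹ * h₂ : H) : H ⧸ Lsub K η) ∈ Subgroup.center (H ⧸ Lsub K η) := by
    have h3 := QuotientGroup.eq.mp hq2
    rwa [show ((h₂' : H ⧸ Lsub K η))⁻¹ * ((h₂ : H ⧸ Lsub K η))
      = ((h₂'⁻¹ * h₂ : H) : H ⧸ Lsub K η) from rfl] at h3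
  have e1 : (⟨⁅((g₁ : G) : G ⧸ K), ((g₂ : G) : G ⧸ K)⁆, mem_commutator_of _ _⟩ :
      commutator (G ⧸ K)) = tauHom K ⟨⁅g₁, g₂⁆, mem_commutator_of g₁ g₂⟩ :=
    Subtype.ext rfl
  rw [e1, eta'_apply]
  apply Subtype.ext
  show (((η ⟨⁅g₁, g₂⁆, mem_commutator_of g₁ g₂⟩ : commutator H) : H) : H ⧸ Lsub K η)
    = ⁅((h₁ : H) : H ⧸ Lsub K η), ((h₂ : H) : H ⧸ Lsub K η)⁆
  rw [hcompat g₁ g₂ h₁' h₂' hg1.symm hg2.symm]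
  have d1 : ((h₁ : H) : H ⧸ Lsub K η)
      = ((h₁' : H) : H ⧸ Lsub K η) * ((h₁'⁻¹ * h₁ : H) : H ⧸ Lsub K η) := by
    rw [← QuotientGroup.mk_mul]
    congr 1
    group
  have d2 : ((h₂ : H) : H ⧸ Lsub K η)
      = ((h₂' : H) : H ⧸ Lsub K η) * ((h₂'⁻¹ * h₂ : H) : H ⧸ Lsub K η) := by
    rw [← QuotientGroup.mk_mul]
    congr 1
    group
  rw [d1, d2, commutator_mul_central hz1 hz2]
  rfl

end Main5

theorem stmt1 (G H : Type) [Group G] [Group H] (K : Subgroup G) [K.Normal]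
    (hK : K ≤ commutator G)
    (ζ : (G ⧸ Subgroup.center G) ≃* (H ⧸ Subgroup.center H))
    (η : (commutator G) ≃* (commutator H))
    (hcompat : ∀ (g₁ g₂ : G) (h₁ h₂ : H),
      ζ ((g₁ : G) : G ⧸ Subgroup.center G) = ((h₁ : H) : H ⧸ Subgroup.center H) →
      ζ ((g₂ : G) : G ⧸ Subgroup.center G) = ((h₂ : H) : H ⧸ Subgroup.center H) →
      η ⟨⁅g₁, g₂⁆, mem_commutator_of g₁ g₂⟩ = ⟨⁅h₁, h₂⁆, mem_commutator_of h₁ h₂⟩) :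
    (((K.subgroupOf (commutator G)).map η.toMonoidHom).map (commutator H).subtype).Normal ∧
    ∀ [(((K.subgroupOf (commutator G)).map η.toMonoidHom).map (commutator H).subtype).Normal],
      IsIsoclinic (G ⧸ K)
        (H ⧸ ((K.subgroupOf (commutator G)).map η.toMonoidHom).map (commutator H).subtype) := by
  refine ⟨L_normal K hK ζ η hcompat, ?_⟩
  intro _inst
  haveI : (Lsub K η).Normal := _inst
  exact main_isoclinic K hK ζ η hcompat
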